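/- Let Y ⊆ ℤ_M be a finite set and p^α | M with α ≥ 1. Then the cyclotomic polynomial Φ_{p^α}(X) divides the mask polynomial Y(X) = Σ_{y ∈ Y} X^y modulo X^M − 1 if and only if for every y ∈ ℤ_M, |Y ∩ Π(y, p^α)| = (1/p)·|Y ∩ Π(y, p^{α−1})|, where Π(y, p^β) = {z ∈ ℤ_M : p^β | z − y}. -/
import Mathlib
open Polynomial Finset

lemma sum_range_mul' {β : Type*} [AddCommMonoid β] (d p : ℕ) (f : ℕ → β) :
    ∑ j ∈ range (d * p), f j = ∑ k ∈ range p, ∑ i ∈ range d, f (i + k * d) := by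
  rw [← Finset.sum_product']
  apply Finset.sum_nbij' (fun j => (j / d, j % d)) (fun x => x.2 + x.1 * d)
  · intro j hj
    simp only [mem_range] at hj
    have hd : 0 < d := by rcases Nat.eq_zero_or_pos d with h|h
                          · subst h; simp at hj
                          · exact h
    simp only [Finset.mem_product, mem_range]
    exact ⟨by rwa [Nat.div_lt_iff_lt_mul hd, mul_comm], Nat.mod_lt _ hd⟩
  · intro x hx
    simp only [Finset.mem_product, mem_range] at hx
    simp only [mem_range]
    calc x.2 + x.1 * d < d + x.1 * d := by omega
      _ = (x.1 + 1) * d := by ring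
      _ ≤ p * d := Nat.mul_le_mul_right d hx.1
      _ = d * p := mul_comm _ _
  · intro j hj; exact Nat.mod_add_div' j d
  · intro x hx
    simp only [Finset.mem_product, mem_range] at hx
    have hd : 0 < d := Nat.pos_of_ne_zero (by omega)
    ext
    · simp [Nat.add_mul_div_right _ _ hd, Nat.div_eq_of_lt hx.2]
    · simp [Nat.add_mul_mod_self_right, Nat.mod_eq_of_lt hx.2]
  · intro j hj; rw [Nat.mod_add_div']

lemma coeff_sum_range (q : ℕ) (c : ℕ → ℤ) (n : ℕ) :
    (∑ j ∈ range q, C (c j) * X ^ j).coeff n = if n < q then c n else 0 := by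
  rw [finset_sum_coeff]
  simp only [coeff_C_mul, coeff_X_pow, mul_ite, mul_one, mul_zero]
  rw [show (∑ j ∈ range q, if n = j then c j else 0)
      = ∑ j ∈ range q, if j = n then c j else 0 by
    apply Finset.sum_congr rfl; intro j _; simp [eq_comm]]
  rw [Finset.sum_ite_eq' (range q) n c]
  simp [mem_range]

lemma keyA (p α : ℕ) (hp : p.Prime) (hα : 1 ≤ α) (c : ℕ → ℤ) :
    (cyclotomic (p ^ α) ℤ ∣ ∑ j ∈ range (p ^ α), C (c j) * X ^ j) ↔
      ∀ i < p ^ (α - 1), ∀ k < p, c (i + k * p ^ (α - 1)) = c i := by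
  set d := p ^ (α - 1) with hd_def
  have hd : 0 < d := pow_pos hp.pos _
  have hq : p ^ α = d * p := by rw [hd_def, ← pow_succ]; congr 1; omega
  have hΦ : cyclotomic (p ^ α) ℤ = ∑ k ∈ range p, (X ^ d : ℤ[X]) ^ k := by
    have h1 : α = (α - 1) + 1 := by omega
    rw [h1]; exact cyclotomic_prime_pow_eq_geom_sum hp
  have hlt : ∀ i < d, ∀ k < p, i + k * d < d * p := by
    intro i hi k hk
    calc i + k * d < d + k * d := by omega
      _ = (k + 1) * d := by ring
      _ ≤ p * d := Nat.mul_le_mul_right d hk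
      _ = d * p := mul_comm _ _
  have hPc : ∀ n, (∑ j ∈ range (p ^ α), C (c j) * X ^ j).coeff n
      = if n < d * p then c n else 0 := by
    intro n; rw [coeff_sum_range, hq]
  constructor
  · rintro ⟨Q, hQP⟩ i hi k hk
    by_cases hQ0 : Q = 0
    · have hP0 : (∑ j ∈ range (p ^ α), C (c j) * X ^ j) = 0 := by
        rw [hQP, hQ0, mul_zero]
      have hz : ∀ j, j < d * p → c j = 0 := by
        intro j hj
        have h2 := hPc j
        rw [hP0] at h2
        simpa [hj] using h2.symm
      rw [hz _ (hlt i hi k hk), hz i (by simpa using hlt i hi 0 hp.pos)]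
    · have hΦne : (cyclotomic (p ^ α) ℤ) ≠ 0 := (cyclotomic.monic _ ℤ).ne_zero
      have hPdeg : (∑ j ∈ range (p ^ α), C (c j) * X ^ j).natDegree ≤ d * p - 1 := by
        rw [Polynomial.natDegree_le_iff_coeff_eq_zero]
        intro N hN
        rw [hPc]
        have : ¬ N < d * p := by omega
        simp [this]
      have hΦdeg : (cyclotomic (p ^ α) ℤ).natDegree = d * (p - 1) := by
        rw [natDegree_cyclotomic, Nat.totient_prime_pow hp (by omega)]
      have e : d * (p - 1) + d = d * p := by
        have h1 : p - 1 + 1 = p := by omega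
        calc d * (p - 1) + d = d * ((p - 1) + 1) := by ring
          _ = d * p := by rw [h1]
      have hQdeg : Q.natDegree < d := by
        have hmul := Polynomial.natDegree_mul hΦne hQ0
        rw [← hQP, hΦdeg] at hmul
        have hdp : 0 < d * p := Nat.mul_pos hd hp.pos
        omega
      have hQc : ∀ j, d ≤ j → Q.coeff j = 0 := fun j hj =>
        Polynomial.coeff_eq_zero_of_natDegree_lt (by omega)
      have key : ∀ i' < d, ∀ k' < p,
          (∑ j ∈ range (p ^ α), C (c j) * X ^ j).coeff (i' + k' * d) = Q.coeff i' := by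
        intro i' hi' k' hk'
        rw [hQP, hΦ, Finset.sum_mul, finset_sum_coeff]
        have hterm : ∀ m ∈ range p, ((X ^ d : ℤ[X]) ^ m * Q).coeff (i' + k' * d)
            = if d * m ≤ i' + k' * d then Q.coeff (i' + k' * d - d * m) else 0 := by
          intro m _
          rw [← pow_mul, Polynomial.X_pow_mul, Polynomial.coeff_mul_X_pow']
        rw [Finset.sum_congr rfl hterm]
        rw [Finset.sum_eq_single k']
        · have hc : d * k' = k' * d := mul_comm _ _
          rw [if_pos (by omega)]
          congr 1
          omega
        · intro b hb hne
          by_cases hb' : d * b ≤ i' + k' * d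
          · rw [if_pos hb']
            apply hQc
            have hbk : b < k' := by
              by_contra hcon
              push_neg at hcon
              have h1 : k' + 1 ≤ b := by omega
              have h2 : d * (k' + 1) ≤ d * b := Nat.mul_le_mul_left d h1
              have h3 : d * (k' + 1) = k' * d + d := by ring
              omega
            have h4 : d * (b + 1) ≤ d * k' := Nat.mul_le_mul_left d (by omega)
            have h5 : d * (b + 1) = d * b + d := by ring
            have h6 : d * k' = k' * d := mul_comm _ _
            omega
          · rw [if_neg hb']
        · intro hcon; exact absurd (mem_range.mpr hk') hcon
      have h1 := key i hi k hk
      have h2 := key i hi 0 hp.pos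
      rw [hPc, if_pos (hlt i hi k hk)] at h1
      rw [hPc, if_pos (by simpa using hlt i hi 0 hp.pos)] at h2
      simp only [Nat.zero_mul, Nat.add_zero] at h2
      exact h1.trans h2.symm
  · intro h
    refine ⟨∑ i ∈ range d, C (c i) * X ^ i, ?_⟩
    rw [hΦ, hq, sum_range_mul' d p (fun j => C (c j) * X ^ j), Finset.sum_mul]
    apply Finset.sum_congr rfl
    intro k hk
    rw [Finset.mul_sum]
    apply Finset.sum_congr rfl
    intro i hi
    rw [h i (mem_range.mp hi) k (mem_range.mp hk)]
    ring

lemma maskB (M q : ℕ) [NeZero M] (hq : 0 < q) (Y : Finset (ZMod M)) :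
    (cyclotomic q ℤ ∣ ∑ y ∈ Y, (X : ℤ[X]) ^ y.val) ↔
      (cyclotomic q ℤ ∣ ∑ j ∈ range q,
        C (((Y.filter fun z => z.val % q = j).card : ℤ)) * X ^ j) := by
  have hdiff : cyclotomic q ℤ ∣
      (∑ y ∈ Y, (X : ℤ[X]) ^ y.val) - ∑ y ∈ Y, (X : ℤ[X]) ^ (y.val % q) := by
    rw [← Finset.sum_sub_distrib]
    apply Finset.dvd_sum
    intro y _
    have h1 : (X : ℤ[X]) ^ (y.val) = (X ^ q) ^ (y.val / q) * X ^ (y.val % q) := by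
      rw [← pow_mul, ← pow_add]
      congr 1
      exact (Nat.div_add_mod _ _).symm
    rw [h1]
    have h2 : (X : ℤ[X]) ^ q - 1 ∣ (X ^ q) ^ (y.val / q) - 1 := by
      simpa using sub_dvd_pow_sub_pow ((X : ℤ[X]) ^ q) 1 (y.val / q)
    have h3 := (cyclotomic.dvd_X_pow_sub_one q ℤ).trans h2
    have h4 : ((X : ℤ[X]) ^ q) ^ (y.val / q) * X ^ (y.val % q) - X ^ (y.val % q)
        = ((X ^ q) ^ (y.val / q) - 1) * X ^ (y.val % q) := by ring
    rw [h4]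
    exact h3.mul_right _
  have heq : (∑ y ∈ Y, (X : ℤ[X]) ^ (y.val % q)) = ∑ j ∈ range q,
      C (((Y.filter fun z => z.val % q = j).card : ℤ)) * X ^ j := by
    rw [← Finset.sum_fiberwise_of_maps_to
      (g := fun z : ZMod M => z.val % q) (t := range q)
      (fun x _ => mem_range.mpr (Nat.mod_lt _ hq)) (fun y => (X : ℤ[X]) ^ (y.val % q))]
    apply Finset.sum_congr rfl
    intro j hj
    rw [Finset.sum_congr rfl (fun z hz => by
      rw [(Finset.mem_filter.mp hz).2])]
    rw [Finset.sum_const, nsmul_eq_mul]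
    simp
  constructor
  · intro h
    have h2 := dvd_sub h hdiff
    rw [sub_sub_cancel] at h2
    rwa [heq] at h2
  · intro h
    rw [← heq] at h
    have h2 := dvd_add hdiff h
    rwa [sub_add_cancel] at h2

lemma dvd_sub_val (M m : ℕ) [NeZero M] (hm : m ∣ M) (hm0 : 0 < m) (z y : ZMod M) :
    (m ∣ (z - y).val) ↔ z.val % m = y.val % m := by
  haveI : NeZero m := ⟨hm0.ne'⟩
  rw [← ZMod.natCast_eq_zero_iff _ m]
  have h : (((z - y).val : ℕ) : ZMod m) = ((z.val : ℕ) : ZMod m) - ((y.val : ℕ) : ZMod m) := by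
    rw [ZMod.natCast_val, ZMod.natCast_val, ZMod.natCast_val]
    rw [← ZMod.castHom_apply (h := hm), ← ZMod.castHom_apply (h := hm),
      ← ZMod.castHom_apply (h := hm), map_sub]
  rw [h, sub_eq_zero, ZMod.natCast_eq_natCast_iff']

lemma countB (M d p q : ℕ) [NeZero M] (hd : 0 < d) (hp0 : 0 < p) (hq : q = d * p)
    (Y : Finset (ZMod M)) (r : ℕ) (hr : r < d) :
    (Y.filter fun z => z.val % d = r).card
      = ∑ k ∈ range p, (Y.filter fun z => z.val % q = r + k * d).card := by
  have hdq : d ∣ q := hq ▸ Dvd.intro p rfl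
  simp only [Finset.card_filter]
  rw [Finset.sum_comm]
  apply Finset.sum_congr rfl
  intro z _
  have hqpos : 0 < q := hq ▸ Nat.mul_pos hd hp0
  set m := z.val % q with hm_def
  have hm1 : m < q := Nat.mod_lt _ hqpos
  have hm2 : m % d = z.val % d := Nat.mod_mod_of_dvd _ hdq
  by_cases h : z.val % d = r
  · rw [if_pos h]
    have hiff : ∀ k, (m = r + k * d ↔ k = m / d) := by
      intro k
      have h3 : m / d * d + m % d = m := Nat.div_add_mod' _ _
      constructor
      · intro he
        have : k * d = m / d * d := by omega
        exact Nat.eq_of_mul_eq_mul_right hd this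
      · intro he
        subst he
        omega
    rw [Finset.sum_congr rfl (fun k _ => by rw [if_congr (hiff k) rfl rfl])]
    rw [Finset.sum_ite_eq' (range p) (m / d) (fun _ => 1)]
    rw [if_pos (mem_range.mpr (by rwa [Nat.div_lt_iff_lt_mul hd, mul_comm, ← hq]))]
  · rw [if_neg h]
    symm
    apply Finset.sum_eq_zero
    intro k _
    rw [if_neg]
    intro he
    apply h
    rw [← hm2, he, Nat.add_mul_mod_self_right, Nat.mod_eq_of_lt hr]

theorem stmt12 (M p α : ℕ) [NeZero M] (hp : p.Prime) (hα : 1 ≤ α) (hdvd : p ^ α ∣ M)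
    (Y : Finset (ZMod M)) :
    (Polynomial.cyclotomic (p ^ α) ℤ ∣ ∑ y ∈ Y, (Polynomial.X : Polynomial ℤ) ^ y.val)
      ↔ ∀ y : ZMod M,
          p * (Y.filter fun z => (p ^ α : ℕ) ∣ ((z - y : ZMod M)).val).card
            = (Y.filter fun z => (p ^ (α - 1) : ℕ) ∣ ((z - y : ZMod M)).val).card := by
  classical
  have hd : 0 < p ^ (α - 1) := pow_pos hp.pos _
  have hq0 : 0 < p ^ α := pow_pos hp.pos _
  have hqdp : p ^ α = p ^ (α - 1) * p := by rw [← pow_succ]; congr 1; omega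
  have hddq : p ^ (α - 1) ∣ p ^ α := pow_dvd_pow p (by omega)
  have hd_dvd_M : p ^ (α - 1) ∣ M := hddq.trans hdvd
  have hqM : p ^ α ≤ M := Nat.le_of_dvd (Nat.pos_of_ne_zero (NeZero.ne M)) hdvd
  have key := keyA p α hp hα (fun j => ((Y.filter fun z => z.val % p ^ α = j).card : ℤ))
  rw [maskB M (p ^ α) hq0 Y, key]
  simp only [Nat.cast_inj]
  have hfq : ∀ y : ZMod M, (Y.filter fun z => (p ^ α : ℕ) ∣ ((z - y : ZMod M)).val)
      = Y.filter fun z => z.val % p ^ α = y.val % p ^ α := by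
    intro y
    apply Finset.filter_congr
    intro z _
    simp only [dvd_sub_val M (p ^ α) hdvd hq0 z y]
  have hfd : ∀ y : ZMod M, (Y.filter fun z => (p ^ (α - 1) : ℕ) ∣ ((z - y : ZMod M)).val)
      = Y.filter fun z => z.val % p ^ (α - 1) = y.val % p ^ (α - 1) := by
    intro y
    apply Finset.filter_congr
    intro z _
    simp only [dvd_sub_val M (p ^ (α - 1)) hd_dvd_M hd z y]
  have hlt : ∀ i < p ^ (α - 1), ∀ k < p, i + k * p ^ (α - 1) < p ^ α := by
    intro i hi k hk
    rw [hqdp]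
    calc i + k * p ^ (α - 1) < p ^ (α - 1) + k * p ^ (α - 1) := by omega
      _ = (k + 1) * p ^ (α - 1) := by ring
      _ ≤ p * p ^ (α - 1) := Nat.mul_le_mul_right _ hk
      _ = p ^ (α - 1) * p := mul_comm _ _
  constructor
  · intro h y
    rw [hfq y, hfd y, countB M (p ^ (α - 1)) p (p ^ α) hd hp.pos hqdp Y
      (y.val % p ^ (α - 1)) (Nat.mod_lt _ hd)]
    have hm2 : (y.val % p ^ α) % p ^ (α - 1) = y.val % p ^ (α - 1) :=
      Nat.mod_mod_of_dvd _ hddq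
    have hm1 : y.val % p ^ α < p ^ α := Nat.mod_lt _ hq0
    have hk0 : (y.val % p ^ α) / p ^ (α - 1) < p := by
      rw [Nat.div_lt_iff_lt_mul hd, mul_comm, ← hqdp]
      exact hm1
    have hm : y.val % p ^ α
        = y.val % p ^ (α - 1) + ((y.val % p ^ α) / p ^ (α - 1)) * p ^ (α - 1) := by
      have h3 := Nat.div_add_mod' (y.val % p ^ α) (p ^ (α - 1))
      rw [← hm2]
      linarith
    have h1 : (Y.filter fun z => z.val % p ^ α = y.val % p ^ α).card
        = (Y.filter fun z => z.val % p ^ α = y.val % p ^ (α - 1)).card := by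
      rw [hm]
      exact h _ (Nat.mod_lt _ hd) _ hk0
    rw [h1]
    rw [Finset.sum_congr rfl (fun k hk => h _ (Nat.mod_lt _ hd) k (mem_range.mp hk))]
    rw [Finset.sum_const, Finset.card_range, smul_eq_mul]
  · intro h i hi k hk
    have hikq : i + k * p ^ (α - 1) < p ^ α := hlt i hi k hk
    have hikM : i + k * p ^ (α - 1) < M := lt_of_lt_of_le hikq hqM
    have hiM : i < M := by
      have : i < p ^ α := lt_of_lt_of_le hi (Nat.le_of_dvd hq0 hddq)
      omega
    set y₁ : ZMod M := ((i + k * p ^ (α - 1) : ℕ) : ZMod M) with hy₁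
    set y₂ : ZMod M := ((i : ℕ) : ZMod M) with hy₂
    have hv₁ : y₁.val = i + k * p ^ (α - 1) := by
      rw [hy₁, ZMod.val_natCast, Nat.mod_eq_of_lt hikM]
    have hv₂ : y₂.val = i := by
      rw [hy₂, ZMod.val_natCast, Nat.mod_eq_of_lt hiM]
    have H1 := h y₁
    have H2 := h y₂
    rw [hfq y₁, hfd y₁, countB M (p ^ (α - 1)) p (p ^ α) hd hp.pos hqdp Y
      (y₁.val % p ^ (α - 1)) (Nat.mod_lt _ hd)] at H1
    rw [hfq y₂, hfd y₂, countB M (p ^ (α - 1)) p (p ^ α) hd hp.pos hqdp Y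
      (y₂.val % p ^ (α - 1)) (Nat.mod_lt _ hd)] at H2
    have e1q : y₁.val % p ^ α = i + k * p ^ (α - 1) := by
      rw [hv₁, Nat.mod_eq_of_lt hikq]
    have e1d : y₁.val % p ^ (α - 1) = i := by
      rw [hv₁, Nat.add_mul_mod_self_right, Nat.mod_eq_of_lt hi]
    have e2q : y₂.val % p ^ α = i := by
      rw [hv₂, Nat.mod_eq_of_lt (lt_of_lt_of_le hi (Nat.le_of_dvd hq0 hddq))]
    have e2d : y₂.val % p ^ (α - 1) = i := by
      rw [hv₂, Nat.mod_eq_of_lt hi]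
    rw [e1q, e1d] at H1
    rw [e2q, e2d] at H2
    have := H1.trans H2.symm
    exact Nat.eq_of_mul_eq_mul_left hp.pos this
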